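/- Let (ξ_i)_{i≥1} be i.i.d. integrable real-valued random variables with E[ξ_1] > 0. Then the random walk started at 1 with these increments stays strictly positive forever with positive probability: P( for all n ≥ 1, 1 + Σ_{i=1}^{n} ξ_i > 0 ) > 0. -/

import Mathlib

open MeasureTheory ProbabilityTheory Filter Topology ENNReal

def cylSet (c N : ℕ) : Set (Fin N → ℝ) :=
  {x | ∀ n, 1 ≤ n → n ≤ N → -(c : ℝ) < ∑ i ∈ Finset.range n, if h : i < N then x ⟨i, h⟩ else 0}

lemma measurableSet_cylSet (c N : ℕ) : MeasurableSet (cylSet c N) := by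
  have h : cylSet c N = ⋂ n, ⋂ (_ : 1 ≤ n), ⋂ (_ : n ≤ N),
      {x : Fin N → ℝ | -(c : ℝ) < ∑ i ∈ Finset.range n, if h : i < N then x ⟨i, h⟩ else 0} := by
    ext x; simp [cylSet]
  rw [h]
  refine MeasurableSet.iInter fun n => MeasurableSet.iInter fun _ =>
    MeasurableSet.iInter fun _ => measurableSet_lt measurable_const ?_
  refine Finset.measurable_sum _ fun i _ => ?_
  by_cases h : i < N
  · simp only [dif_pos h]; exact measurable_pi_apply _
  · simp only [dif_neg h]; exact measurable_const

lemma preimage_cylSet {Ω : Type*} [MeasurableSpace Ω] (ξ : ℕ → Ω → ℝ) (c K N : ℕ) :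
    (fun ω (j : Fin N) => ξ (K + (j : ℕ)) ω) ⁻¹' (cylSet c N)
      = {ω | ∀ n, 1 ≤ n → n ≤ N → -(c : ℝ) < ∑ j ∈ Finset.range n, ξ (K + j) ω} := by
  ext ω
  simp only [Set.mem_preimage, cylSet, Set.mem_setOf_eq]
  refine forall_congr' fun n => forall_congr' fun h1 => forall_congr' fun h2 => ?_
  have hsum : (∑ i ∈ Finset.range n,
      if h : i < N then (fun j : Fin N => ξ (K + (j : ℕ)) ω) ⟨i, h⟩ else 0)
      = ∑ j ∈ Finset.range n, ξ (K + j) ω :=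
    Finset.sum_congr rfl fun i hi => by
      rw [dif_pos (lt_of_lt_of_le (Finset.mem_range.1 hi) h2)]
  rw [hsum]

lemma rw_tuple_law {Ω : Type*} [MeasurableSpace Ω] (P : Measure Ω) [IsProbabilityMeasure P]
    (ξ : ℕ → Ω → ℝ) (hmeas : ∀ i, Measurable (ξ i))
    (hdist : ∀ i, P.map (ξ i) = P.map (ξ 0))
    (hindep : iIndepFun ξ P) (K N : ℕ) :
    P.map (fun ω (j : Fin N) => ξ (K + (j : ℕ)) ω)
      = Measure.pi (fun _ : Fin N => P.map (ξ 0)) := by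
  classical
  haveI : IsProbabilityMeasure (P.map (ξ 0)) :=
    Measure.isProbabilityMeasure_map (hmeas 0).aemeasurable
  refine (Measure.pi_eq fun s hs => ?_).symm
  have hg : Measurable (fun ω (j : Fin N) => ξ (K + (j : ℕ)) ω) :=
    measurable_pi_lambda _ fun j => hmeas _
  rw [Measure.map_apply hg (MeasurableSet.univ_pi hs)]
  set sets : ℕ → Set ℝ := fun i =>
    if h : K ≤ i ∧ i < K + N then s ⟨i - K, by omega⟩ else Set.univ with hsets
  have hkey : ∀ j : Fin N, sets (K + (j : ℕ)) = s j := by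
    intro j
    simp only [hsets]
    rw [dif_pos ⟨Nat.le_add_right _ _, by omega⟩]
    ext
    simp
  have hpre : (fun ω (j : Fin N) => ξ (K + (j : ℕ)) ω) ⁻¹' (Set.univ.pi s)
      = ⋂ i ∈ Finset.image (fun j : Fin N => K + (j : ℕ)) Finset.univ, ξ i ⁻¹' sets i := by
    ext ω
    simp only [Set.mem_preimage, Set.mem_pi, Set.mem_univ, forall_true_left, Set.mem_iInter,
      Finset.mem_image, Finset.mem_univ, true_and, Set.mem_setOf_eq]
    constructor
    · rintro h i ⟨j, rfl⟩
      rw [hkey j]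
      exact h j
    · intro h j
      have := h (K + (j : ℕ)) ⟨j, rfl⟩
      rwa [hkey j] at this
  rw [hpre, hindep.measure_inter_preimage_eq_mul _ (fun i _ => by
    simp only [hsets]
    by_cases h : K ≤ i ∧ i < K + N
    · simp only [dif_pos h]; exact hs _
    · simp only [dif_neg h]; exact MeasurableSet.univ)]
  rw [Finset.prod_image (fun a _ b _ hab => Fin.ext (by simpa using hab))]
  refine Finset.prod_congr rfl fun j _ => ?_
  rw [hkey j, ← Measure.map_apply (hmeas _) (hs j), hdist]

/-- Let `(ξ_i)_{i ≥ 1}` be i.i.d. integrable real random variables with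
`E[ξ_1] > 0`. Then the random walk started at `1` with these increments stays strictly
positive forever with positive probability:
`P(∀ n ≥ 1, 1 + ∑_{i=1}^n ξ_i > 0) > 0`. -/
theorem random_walk_positive_drift_stays_positive
    {Ω : Type*} [MeasurableSpace Ω] (P : Measure Ω) [IsProbabilityMeasure P]
    (ξ : ℕ → Ω → ℝ)
    (hmeas : ∀ i, Measurable (ξ i))
    (hint : Integrable (ξ 0) P)
    (hdist : ∀ i, P.map (ξ i) = P.map (ξ 0))
    (hindep : iIndepFun ξ P)
    (hmean : 0 < ∫ ω, ξ 0 ω ∂P) :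
    0 < P {ω | ∀ n : ℕ, 1 ≤ n → 0 < 1 + ∑ i ∈ Finset.range n, ξ i ω} := by
  classical
  have hident : ∀ i, IdentDistrib (ξ i) (ξ 0) P P :=
    fun i => ⟨(hmeas i).aemeasurable, (hmeas 0).aemeasurable, hdist i⟩
  have hpair : Pairwise (Function.onFun (IndepFun · · P) ξ) := fun i j hij => hindep.indepFun hij
  have hslln := strong_law_ae_real ξ hint hpair hident
  -- a.s. the walk is bounded below
  have hae : ∀ᵐ ω ∂P, ∃ c : ℕ, ∀ n, 1 ≤ n → -(c : ℝ) < ∑ i ∈ Finset.range n, ξ i ω := by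
    filter_upwards [hslln] with ω hω
    have h0 : ∀ᶠ n : ℕ in atTop, 0 < (∑ i ∈ Finset.range n, ξ i ω) / n :=
      hω.eventually (eventually_gt_nhds hmean)
    obtain ⟨N₀, hN₀⟩ := eventually_atTop.1 h0
    refine ⟨1 + ∑ m ∈ Finset.range (max N₀ 1), ⌈|∑ i ∈ Finset.range m, ξ i ω|⌉₊,
      fun n hn => ?_⟩
    by_cases hc : n < max N₀ 1
    · have h1 : |∑ i ∈ Finset.range n, ξ i ω| ≤
          ((∑ m ∈ Finset.range (max N₀ 1), ⌈|∑ i ∈ Finset.range m, ξ i ω|⌉₊ : ℕ) : ℝ) := by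
        calc |∑ i ∈ Finset.range n, ξ i ω|
            ≤ (⌈|∑ i ∈ Finset.range n, ξ i ω|⌉₊ : ℝ) := Nat.le_ceil _
          _ ≤ _ := by
              exact_mod_cast Finset.single_le_sum
                (f := fun m => ⌈|∑ i ∈ Finset.range m, ξ i ω|⌉₊)
                (fun m _ => Nat.zero_le _) (Finset.mem_range.2 hc)
      have h2 := neg_abs_le (∑ i ∈ Finset.range n, ξ i ω)
      push_cast at h1 ⊢
      linarith
    · push_neg at hc
      have hge := hN₀ n (le_trans (le_max_left _ _) hc)
      have hn1 : (1 : ℕ) ≤ n := le_trans (le_max_right _ _) hc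
      have hnpos : (0 : ℝ) < n := by exact_mod_cast hn1
      have hpos : 0 < ∑ i ∈ Finset.range n, ξ i ω := by
        by_contra h
        push_neg at h
        have := div_nonpos_of_nonpos_of_nonneg h hnpos.le
        linarith
      have hsumnn : (0 : ℝ) ≤
          ((∑ m ∈ Finset.range (max N₀ 1), ⌈|∑ i ∈ Finset.range m, ξ i ω|⌉₊ : ℕ) : ℝ) := by
        positivity
      push_cast at hsumnn ⊢
      linarith
  -- choose the level c
  have hAex : ∃ c : ℕ, 0 < P {ω | ∀ n, 1 ≤ n → -(c : ℝ) < ∑ i ∈ Finset.range n, ξ i ω} := by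
    by_contra h
    push_neg at h
    have h0 : ∀ c : ℕ, P {ω | ∀ n, 1 ≤ n → -(c : ℝ) < ∑ i ∈ Finset.range n, ξ i ω} = 0 :=
      fun c => le_antisymm (h c) zero_le
    have hU : P (⋃ c : ℕ, {ω | ∀ n, 1 ≤ n → -(c : ℝ) < ∑ i ∈ Finset.range n, ξ i ω}) = 0 :=
      measure_iUnion_null h0
    have h1 : P {ω | ¬ ∃ c : ℕ, ∀ n, 1 ≤ n → -(c : ℝ) < ∑ i ∈ Finset.range n, ξ i ω} = 0 :=
      ae_iff.mp hae
    have hsub : (Set.univ : Set Ω) ⊆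
        (⋃ c : ℕ, {ω | ∀ n, 1 ≤ n → -(c : ℝ) < ∑ i ∈ Finset.range n, ξ i ω}) ∪
          {ω | ¬ ∃ c : ℕ, ∀ n, 1 ≤ n → -(c : ℝ) < ∑ i ∈ Finset.range n, ξ i ω} := by
      intro ω _
      by_cases hω : ∃ c : ℕ, ∀ n, 1 ≤ n → -(c : ℝ) < ∑ i ∈ Finset.range n, ξ i ω
      · obtain ⟨c, hc⟩ := hω
        exact Or.inl (Set.mem_iUnion.2 ⟨c, hc⟩)
      · exact Or.inr hω
    have hle := (measure_mono hsub).trans (measure_union_le (μ := P) _ _)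
    rw [hU, h1, measure_univ] at hle
    simp at hle
  obtain ⟨c, hcpos⟩ := hAex
  -- choose ε with positive probability of a big step
  have hξ0 : 0 < P {ω | 0 < ξ 0 ω} := by
    by_contra h
    push_neg at h
    have h0 : P {ω | 0 < ξ 0 ω} = 0 := le_antisymm h zero_le
    have hle : ξ 0 ≤ᵐ[P] 0 := by
      rw [EventuallyLE, ae_iff]
      convert h0 using 2
      ext ω
      simp [not_le]
    have := integral_nonpos_of_ae hle
    linarith
  have hεk : ∃ k : ℕ, 0 < P {ω | 1 / ((k : ℝ) + 1) < ξ 0 ω} := by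
    by_contra h
    push_neg at h
    have h0 : ∀ k : ℕ, P {ω | 1 / ((k : ℝ) + 1) < ξ 0 ω} = 0 :=
      fun k => le_antisymm (h k) zero_le
    have hsub : {ω | 0 < ξ 0 ω} ⊆ ⋃ k : ℕ, {ω | 1 / ((k : ℝ) + 1) < ξ 0 ω} := by
      intro ω hω
      have hω' : 0 < ξ 0 ω := hω
      obtain ⟨k, hk⟩ := exists_nat_gt (1 / ξ 0 ω)
      refine Set.mem_iUnion.2 ⟨k, ?_⟩
      have h1 : 1 / ξ 0 ω < (k : ℝ) + 1 := hk.trans (by linarith)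
      exact (one_div_lt (by positivity) hω').2 h1
    exact absurd (measure_mono_null hsub (measure_iUnion_null h0)) (ne_of_gt hξ0)
  obtain ⟨k, hk⟩ := hεk
  set ε : ℝ := 1 / ((k : ℝ) + 1) with hε
  have hεpos : 0 < ε := by rw [hε]; positivity
  set K : ℕ := c * (k + 1) with hKdef
  have hKε : (K : ℝ) * ε = c := by
    rw [hKdef, hε]
    push_cast
    field_simp
  -- the events
  set A : ℕ → Set Ω :=
    fun K' => {ω | ∀ n, 1 ≤ n → -(c : ℝ) < ∑ j ∈ Finset.range n, ξ (K' + j) ω} with hAdef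
  set T : ℕ → ℕ → Set Ω :=
    fun K' N => {ω | ∀ n, 1 ≤ n → n ≤ N → -(c : ℝ) < ∑ j ∈ Finset.range n, ξ (K' + j) ω}
    with hTdef
  have hgmeas : ∀ K' N : ℕ, Measurable (fun ω (j : Fin N) => ξ (K' + (j : ℕ)) ω) :=
    fun K' N => measurable_pi_lambda _ fun j => hmeas _
  have hTpre : ∀ K' N : ℕ,
      T K' N = (fun ω (j : Fin N) => ξ (K' + (j : ℕ)) ω) ⁻¹' (cylSet c N) :=
    fun K' N => (preimage_cylSet ξ c K' N).symm
  have hTmeas : ∀ K' N : ℕ, MeasurableSet (T K' N) := fun K' N => by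
    rw [hTpre]
    exact (measurableSet_cylSet c N).preimage (hgmeas K' N)
  have hTanti : ∀ K', Antitone (T K') := fun K' N M hNM ω hω n h1 h2 =>
    hω n h1 (h2.trans hNM)
  have hAiInter : ∀ K', A K' = ⋂ N, T K' N := by
    intro K'
    ext ω
    simp only [hAdef, hTdef, Set.mem_setOf_eq, Set.mem_iInter]
    constructor
    · exact fun h N n h1 _ => h n h1
    · exact fun h n h1 => h n n h1 le_rfl
  have hTprob : ∀ K' N, P (T K' N) = P (T 0 N) := by
    intro K' N
    rw [hTpre K' N, hTpre 0 N,
      ← Measure.map_apply (hgmeas K' N) (measurableSet_cylSet c N),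
      ← Measure.map_apply (hgmeas 0 N) (measurableSet_cylSet c N),
      rw_tuple_law P ξ hmeas hdist hindep K' N, rw_tuple_law P ξ hmeas hdist hindep 0 N]
  have hAprob : ∀ K', P (A K') = P (A 0) := by
    intro K'
    have t1 : Tendsto (fun N => P (T K' N)) atTop (𝓝 (P (⋂ N, T K' N))) :=
      tendsto_measure_iInter_atTop (fun N => (hTmeas K' N).nullMeasurableSet) (hTanti K')
        ⟨0, measure_ne_top _ _⟩
    have t0 : Tendsto (fun N => P (T 0 N)) atTop (𝓝 (P (⋂ N, T 0 N))) :=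
      tendsto_measure_iInter_atTop (fun N => (hTmeas 0 N).nullMeasurableSet) (hTanti 0)
        ⟨0, measure_ne_top _ _⟩
    have heq : (fun N => P (T K' N)) = fun N => P (T 0 N) := funext fun N => hTprob K' N
    rw [hAiInter K', hAiInter 0]
    exact tendsto_nhds_unique (heq ▸ t1) t0
  have hA0pos : 0 < P (A 0) := by
    have : A 0 = {ω | ∀ n, 1 ≤ n → -(c : ℝ) < ∑ i ∈ Finset.range n, ξ i ω} := by
      simp only [hAdef, Nat.zero_add]
    rw [this]
    exact hcpos
  -- the event that the first K steps are large
  set E1 : Set Ω := ⋂ i ∈ Finset.range K, ξ i ⁻¹' Set.Ioi ε with hE1def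
  have hE1meas : MeasurableSet E1 :=
    Finset.measurableSet_biInter _ fun i _ => (hmeas i) measurableSet_Ioi
  have hE1prob : P E1 = (P.map (ξ 0) (Set.Ioi ε)) ^ K := by
    rw [hE1def, hindep.measure_inter_preimage_eq_mul (Finset.range K)
      (sets := fun _ => Set.Ioi ε) (fun i _ => measurableSet_Ioi)]
    rw [Finset.prod_congr rfl
      (fun i _ => by rw [← Measure.map_apply (hmeas i) measurableSet_Ioi, hdist i])]
    simp
  have hIoipos : 0 < P.map (ξ 0) (Set.Ioi ε) := by
    rw [Measure.map_apply (hmeas 0) measurableSet_Ioi]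
    have : ξ 0 ⁻¹' Set.Ioi ε = {ω | 1 / ((k : ℝ) + 1) < ξ 0 ω} := rfl
    rw [this]
    exact hk
  have hE1pos : 0 < P E1 := by
    rw [hE1prob]
    exact ENNReal.pow_pos hIoipos K
  -- independence of E1 and T K N
  have hindepN : ∀ N, P (E1 ∩ T K N) = P E1 * P (T K N) := by
    intro N
    have hmemTf : ∀ j : Fin N,
        K + (j : ℕ) ∈ Finset.image (fun j : Fin N => K + (j : ℕ)) Finset.univ :=
      fun j => Finset.mem_image.2 ⟨j, Finset.mem_univ _, rfl⟩
    have hdisj : Disjoint (Finset.range K)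
        (Finset.image (fun j : Fin N => K + (j : ℕ)) Finset.univ) := by
      rw [Finset.disjoint_left]
      intro a ha hb
      rw [Finset.mem_range] at ha
      rw [Finset.mem_image] at hb
      obtain ⟨j, -, rfl⟩ := hb
      omega
    have hIF := hindep.indepFun_finset (Finset.range K)
      (Finset.image (fun j : Fin N => K + (j : ℕ)) Finset.univ) hdisj hmeas
    have hSBmeas : MeasurableSet (Set.univ.pi fun _ : { i // i ∈ Finset.range K } => Set.Ioi ε) :=
      MeasurableSet.univ_pi fun _ => measurableSet_Ioi
    have hr : Measurable fun
        (y : { i // i ∈ Finset.image (fun j : Fin N => K + (j : ℕ)) Finset.univ } → ℝ)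
        (j : Fin N) => y ⟨K + (j : ℕ), hmemTf j⟩ :=
      measurable_pi_lambda _ fun j => measurable_pi_apply _
    have hSCmeas : MeasurableSet ((fun
        (y : { i // i ∈ Finset.image (fun j : Fin N => K + (j : ℕ)) Finset.univ } → ℝ)
        (j : Fin N) => y ⟨K + (j : ℕ), hmemTf j⟩) ⁻¹' (cylSet c N)) :=
      (measurableSet_cylSet c N).preimage hr
    have hpre1 : (fun a (i : { i // i ∈ Finset.range K }) => ξ i a) ⁻¹'
        (Set.univ.pi fun _ => Set.Ioi ε) = E1 := by
      ext ω
      simp only [Set.mem_preimage, Set.mem_pi, Set.mem_univ, forall_true_left, hE1def,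
        Set.mem_iInter, Set.mem_Ioi, Subtype.forall]
    have hpre2 : (fun a (i : { i // i ∈ Finset.image (fun j : Fin N => K + (j : ℕ)) Finset.univ })
          => ξ i a) ⁻¹'
        ((fun (y : { i // i ∈ Finset.image (fun j : Fin N => K + (j : ℕ)) Finset.univ } → ℝ)
          (j : Fin N) => y ⟨K + (j : ℕ), hmemTf j⟩) ⁻¹' (cylSet c N)) = T K N := by
      rw [← Set.preimage_comp, hTpre K N]
      rfl
    have hmul := indepFun_iff_measure_inter_preimage_eq_mul.1 hIF
      (Set.univ.pi fun _ => Set.Ioi ε) _ hSBmeas hSCmeas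
    rwa [hpre1, hpre2] at hmul
  -- P (E1 ∩ A K) = P E1 * P (A 0)
  have hEA : P (E1 ∩ A K) = P E1 * P (A 0) := by
    have h1 : E1 ∩ A K = ⋂ N, E1 ∩ T K N := by
      rw [hAiInter K, Set.inter_iInter]
    have t1 : Tendsto (fun N => P (E1 ∩ T K N)) atTop (𝓝 (P (E1 ∩ A K))) := by
      rw [h1]
      exact tendsto_measure_iInter_atTop
        (fun N => (hE1meas.inter (hTmeas K N)).nullMeasurableSet)
        (fun N M hNM => Set.inter_subset_inter_right _ (hTanti K hNM))
        ⟨0, measure_ne_top _ _⟩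
    have t2 : Tendsto (fun N => P (E1 ∩ T K N)) atTop (𝓝 (P E1 * P (A 0))) := by
      have heq : (fun N => P (E1 ∩ T K N)) = fun N => P E1 * P (T 0 N) :=
        funext fun N => by rw [hindepN N, hTprob K N]
      rw [heq]
      have ht0 : Tendsto (fun N => P (T 0 N)) atTop (𝓝 (P (⋂ N, T 0 N))) :=
        tendsto_measure_iInter_atTop (fun N => (hTmeas 0 N).nullMeasurableSet) (hTanti 0)
          ⟨0, measure_ne_top _ _⟩
      rw [hAiInter 0]
      exact ENNReal.Tendsto.const_mul ht0 (Or.inr (measure_ne_top P E1))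
    exact tendsto_nhds_unique t1 t2
  -- inclusion
  have hsub : E1 ∩ A K ⊆ {ω | ∀ n : ℕ, 1 ≤ n → 0 < 1 + ∑ i ∈ Finset.range n, ξ i ω} := by
    rintro ω ⟨hω1, hω2⟩ n hn
    have hstep : ∀ i, i < K → ε < ξ i ω := by
      intro i hi
      have := Set.mem_iInter.1 hω1 i
      have := Set.mem_iInter.1 this (Finset.mem_range.2 hi)
      exact this
    by_cases hnK : n ≤ K
    · have hnn : (0 : ℝ) ≤ ∑ i ∈ Finset.range n, ξ i ω :=
        Finset.sum_nonneg fun i hi =>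
          (hεpos.trans (hstep i (lt_of_lt_of_le (Finset.mem_range.1 hi) hnK))).le
      linarith
    · push_neg at hnK
      have hsplit := Finset.sum_range_add (fun i => ξ i ω) K (n - K)
      rw [show K + (n - K) = n by omega] at hsplit
      have h1 : (K : ℝ) * ε ≤ ∑ i ∈ Finset.range K, ξ i ω := by
        calc (K : ℝ) * ε = ∑ _i ∈ Finset.range K, ε := by
              rw [Finset.sum_const, Finset.card_range, nsmul_eq_mul]
          _ ≤ _ := Finset.sum_le_sum fun i hi => (hstep i (Finset.mem_range.1 hi)).le
      have h2 : -(c : ℝ) < ∑ j ∈ Finset.range (n - K), ξ (K + j) ω :=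
        hω2 (n - K) (by omega)
      rw [hKε] at h1
      rw [hsplit]
      linarith
  calc (0 : ℝ≥0∞) < P E1 * P (A 0) :=
        ENNReal.mul_pos (ne_of_gt hE1pos) (ne_of_gt hA0pos)
    _ = P (E1 ∩ A K) := hEA.symm
    _ ≤ P {ω | ∀ n : ℕ, 1 ≤ n → 0 < 1 + ∑ i ∈ Finset.range n, ξ i ω} := measure_mono hsub
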